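/- Let S(2) = ⟨S, →⟩ be the dense local order with partition {A, B} and linear order ρ. If D ⊆ S is an elementary substructure of S(2), then ⟨D, ρ ↾ D⟩ has at most one endpoint (it cannot have both a minimum and a maximum). -/

import Mathlib

/-- Points of the unit circle with rational angle. -/
def Scirc : Set ℂ := {z | ∃ q : ℚ, z = Complex.exp (q * Complex.I)}

/-- The dense local order relation: `e^{q₁i} → e^{q₂i}` iff
`q₂ - q₁ ∈ ⋃_{k∈ℤ} (2kπ, 2kπ + π)`. -/
def Arrow2 (x y : ℂ) : Prop :=
  ∃ q₁ q₂ : ℚ, x = Complex.exp (q₁ * Complex.I) ∧ y = Complex.exp (q₂ * Complex.I) ∧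
    ∃ k : ℤ, 2 * (k : ℝ) * Real.pi < (q₂ : ℝ) - (q₁ : ℝ) ∧
      (q₂ : ℝ) - (q₁ : ℝ) < 2 * (k : ℝ) * Real.pi + Real.pi

/-- The left half-circle: points with angle in `⋃_k (π/2 + 2kπ, 3π/2 + 2kπ)`. -/
def PartA : Set ℂ :=
  {z | ∃ q : ℚ, z = Complex.exp (q * Complex.I) ∧
    ∃ k : ℤ, Real.pi / 2 + 2 * (k : ℝ) * Real.pi < (q : ℝ) ∧
      (q : ℝ) < 3 * Real.pi / 2 + 2 * (k : ℝ) * Real.pi}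

/-- The right half-circle. -/
def PartB : Set ℂ := Scirc \ PartA

/-- The linear order `ρ`: agrees with `→` inside each part and with `→⁻¹`
across the two parts. -/
def Rho (x y : ℂ) : Prop :=
  (((x ∈ PartA ∧ y ∈ PartA) ∨ (x ∈ PartB ∧ y ∈ PartB)) ∧ Arrow2 x y) ∨
  (((x ∈ PartA ∧ y ∈ PartB) ∨ (x ∈ PartB ∧ y ∈ PartA)) ∧ Arrow2 y x)


noncomputable def fidx (q : ℚ) : ℤ := ⌊((q:ℝ) - Real.pi/2)/Real.pi⌋
noncomputable def kval (q : ℚ) : ℝ := (q:ℝ) - Real.pi * fidx q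

lemma rat_eq_int_mul_pi {q : ℚ} {n : ℤ} (h : (q:ℝ) = n * Real.pi) : n = 0 := by
  by_contra hn
  exact (irrational_pi.intCast_mul hn) ⟨q, h⟩

lemma fidx_strict (q : ℚ) :
    (fidx q : ℝ) * Real.pi < (q:ℝ) - Real.pi/2 ∧
    (q:ℝ) - Real.pi/2 < ((fidx q : ℝ) + 1) * Real.pi := by
  have hp : (0:ℝ) < Real.pi := Real.pi_pos
  set t : ℝ := ((q:ℝ) - Real.pi/2)/Real.pi with ht
  have h1 : (fidx q : ℝ) ≤ t := Int.floor_le t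
  have h2 : t < (fidx q : ℝ) + 1 := Int.lt_floor_add_one t
  have hne : (fidx q : ℝ) ≠ t := by
    intro h
    have hq : (q:ℝ) - Real.pi/2 = (fidx q : ℝ) * Real.pi := by
      rw [h, ht]; field_simp
    have h2q : ((2*q : ℚ) : ℝ) = ((2 * fidx q + 1 : ℤ) : ℝ) * Real.pi := by
      push_cast; linarith
    have := rat_eq_int_mul_pi h2q
    omega
  have h1' : (fidx q : ℝ) < t := lt_of_le_of_ne h1 hne
  have htpi : t * Real.pi = (q:ℝ) - Real.pi/2 := by rw [ht]; field_simp
  constructor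
  · calc (fidx q : ℝ) * Real.pi < t * Real.pi := mul_lt_mul_of_pos_right h1' hp
       _ = (q:ℝ) - Real.pi/2 := htpi
  · calc (q:ℝ) - Real.pi/2 = t * Real.pi := htpi.symm
       _ < ((fidx q : ℝ) + 1) * Real.pi := mul_lt_mul_of_pos_right h2 hp

lemma kval_bounds (q : ℚ) : Real.pi/2 < kval q ∧ kval q < 3*Real.pi/2 := by
  obtain ⟨h1, h2⟩ := fidx_strict q
  constructor <;> (unfold kval; nlinarith [Real.pi_pos])

lemma kval_inj {q q' : ℚ} (h : kval q = kval q') : q = q' := by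
  unfold kval at h
  have h' : ((q - q' : ℚ) : ℝ) = ((fidx q - fidx q' : ℤ) : ℝ) * Real.pi := by
    push_cast; linarith
  have h0 := rat_eq_int_mul_pi h'
  have h1 : ((q - q' : ℚ) : ℝ) = 0 := by rw [h', h0]; simp
  have h2 : (q - q' : ℚ) = 0 := by exact_mod_cast h1
  linarith [h2]

def arw (r : ℝ) : Prop :=
  ∃ k : ℤ, 2*(k:ℝ)*Real.pi < r ∧ r < 2*(k:ℝ)*Real.pi + Real.pi

lemma arw_iff (q₁ q₂ : ℚ) :
    arw ((q₂:ℝ) - (q₁:ℝ)) ↔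
      ((Even (fidx q₂ - fidx q₁) ∧ kval q₁ < kval q₂) ∨
       (¬ Even (fidx q₂ - fidx q₁) ∧ kval q₂ < kval q₁)) := by
  have hp : (0:ℝ) < Real.pi := Real.pi_pos
  obtain ⟨hl1, hu1⟩ := kval_bounds q₁
  obtain ⟨hl2, hu2⟩ := kval_bounds q₂
  have key : (q₂:ℝ) - (q₁:ℝ) = (kval q₂ - kval q₁) + Real.pi * ((fidx q₂ - fidx q₁ : ℤ) : ℝ) := by
    unfold kval; push_cast; ring
  constructor
  · rintro ⟨k, hk1, hk2⟩
    rcases Int.even_or_odd (fidx q₂ - fidx q₁) with ⟨j, hj⟩ | ⟨j, hj⟩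
    · left
      refine ⟨⟨j, hj⟩, ?_⟩
      rw [key, hj] at hk1 hk2
      push_cast at hk1 hk2
      rcases lt_trichotomy k j with h | h | h
      · have h' : (k:ℝ) ≤ (j:ℝ) - 1 := by
          have := Int.le_sub_one_of_lt h; exact_mod_cast this
        have hm := mul_le_mul_of_nonneg_right h' hp.le
        linarith
      · subst h; linarith
      · have h' : (j:ℝ) ≤ (k:ℝ) - 1 := by
          have := Int.le_sub_one_of_lt h; exact_mod_cast this
        have hm := mul_le_mul_of_nonneg_right h' hp.le
        linarith
    · right
      refine ⟨by simp [hj, Int.even_add_one, parity_simps], ?_⟩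
      rw [key, hj] at hk1 hk2
      push_cast at hk1 hk2
      rcases lt_trichotomy k j with h | h | h
      · have h' : (k:ℝ) ≤ (j:ℝ) - 1 := by
          have := Int.le_sub_one_of_lt h; exact_mod_cast this
        have hm := mul_le_mul_of_nonneg_right h' hp.le
        linarith
      · subst h; linarith
      · have h' : (j:ℝ) ≤ (k:ℝ) - 1 := by
          have := Int.le_sub_one_of_lt h; exact_mod_cast this
        have hm := mul_le_mul_of_nonneg_right h' hp.le
        linarith
  · rintro (⟨⟨j, hj⟩, hlt⟩ | ⟨hodd, hlt⟩)
    · refine ⟨j, ?_, ?_⟩ <;> (rw [key, hj]; push_cast; linarith)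
    · rcases Int.even_or_odd (fidx q₂ - fidx q₁) with he | ⟨j, hj⟩
      · exact absurd he hodd
      · refine ⟨j, ?_, ?_⟩ <;> (rw [key, hj]; push_cast; linarith)

lemma expq_inj {q q' : ℚ}
    (h : Complex.exp ((q:ℂ) * Complex.I) = Complex.exp ((q':ℂ) * Complex.I)) : q = q' := by
  rw [Complex.exp_eq_exp_iff_exists_int] at h
  obtain ⟨n, hn⟩ := h
  have him := congrArg Complex.im hn
  simp [Complex.mul_im, Complex.add_im] at him
  -- him : (q:ℝ) = q' + n * (2*π)  (hopefully)
  have h' : ((q - q' : ℚ) : ℝ) = ((2*n : ℤ) : ℝ) * Real.pi := by push_cast; linarith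
  have h0 := rat_eq_int_mul_pi h'
  have : (n:ℝ) = 0 := by exact_mod_cast (by omega : n = 0)
  have : ((q:ℚ):ℝ) = ((q':ℚ):ℝ) := by rw [him, this]; ring
  exact_mod_cast this

lemma arrow2_iff (q₁ q₂ : ℚ) :
    Arrow2 (Complex.exp ((q₁:ℂ) * Complex.I)) (Complex.exp ((q₂:ℂ) * Complex.I)) ↔
      arw ((q₂:ℝ) - (q₁:ℝ)) := by
  constructor
  · rintro ⟨p₁, p₂, h1, h2, k, hk1, hk2⟩
    have e1 : q₁ = p₁ := expq_inj h1
    have e2 : q₂ = p₂ := expq_inj h2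
    subst e1; subst e2
    exact ⟨k, hk1, hk2⟩
  · rintro ⟨k, h1, h2⟩
    exact ⟨q₁, q₂, rfl, rfl, k, h1, h2⟩

lemma partA_iff (q : ℚ) :
    Complex.exp ((q:ℂ) * Complex.I) ∈ PartA ↔ Even (fidx q) := by
  have hp : (0:ℝ) < Real.pi := Real.pi_pos
  constructor
  · rintro ⟨p, hpe, k, h1, h2⟩
    have e1 : q = p := expq_inj hpe
    subst e1
    have hf : fidx q = 2*k := by
      apply Int.floor_eq_iff.mpr
      constructor
      · rw [le_div_iff₀ hp]; push_cast; linarith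
      · rw [div_lt_iff₀ hp]; push_cast; linarith
    exact ⟨k, by omega⟩
  · rintro ⟨k, hk⟩
    obtain ⟨h1, h2⟩ := fidx_strict q
    rw [hk] at h1 h2
    push_cast at h1 h2
    exact ⟨q, rfl, k, by linarith, by linarith⟩

lemma scirc_mem (q : ℚ) : Complex.exp ((q:ℂ) * Complex.I) ∈ Scirc := ⟨q, rfl⟩

lemma partB_iff (q : ℚ) :
    Complex.exp ((q:ℂ) * Complex.I) ∈ PartB ↔ ¬ Even (fidx q) := by
  unfold PartB
  simp only [Set.mem_diff, scirc_mem q, true_and, partA_iff]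

lemma rho_lt {q₁ q₂ : ℚ}
    (h : Rho (Complex.exp ((q₁:ℂ) * Complex.I)) (Complex.exp ((q₂:ℂ) * Complex.I))) :
    kval q₁ < kval q₂ := by
  rcases h with ⟨hpart, harr⟩ | ⟨hpart, harr⟩
  · have hev : Even (fidx q₂ - fidx q₁) := by
      rw [Int.even_sub]
      rcases hpart with ⟨ha1, ha2⟩ | ⟨hb1, hb2⟩
      · rw [partA_iff] at ha1 ha2; tauto
      · rw [partB_iff] at hb1 hb2; tauto
    rcases (arw_iff q₁ q₂).mp ((arrow2_iff q₁ q₂).mp harr) with ⟨_, hlt⟩ | ⟨hne, _⟩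
    · exact hlt
    · exact absurd hev hne
  · have hodd : ¬ Even (fidx q₁ - fidx q₂) := by
      rw [Int.even_sub]
      rcases hpart with ⟨ha1, hb2⟩ | ⟨hb1, ha2⟩
      · rw [partA_iff] at ha1; rw [partB_iff] at hb2; tauto
      · rw [partB_iff] at hb1; rw [partA_iff] at ha2; tauto
    rcases (arw_iff q₂ q₁).mp ((arrow2_iff q₂ q₁).mp harr) with ⟨hev, _⟩ | ⟨_, hlt⟩
    · exact absurd hev hodd
    · exact hlt

/-- The key conditional lemma for the chosen formula. -/
lemma cond_iff (q r : ℚ) :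
    (if Even (fidx q) then Arrow2 (Complex.exp ((q:ℂ) * Complex.I)) (Complex.exp ((r:ℂ) * Complex.I))
     else Arrow2 (Complex.exp ((r:ℂ) * Complex.I)) (Complex.exp ((q:ℂ) * Complex.I))) ↔
    ((Even (fidx r) ∧ kval q < kval r) ∨ (¬ Even (fidx r) ∧ kval r < kval q)) := by
  by_cases hq : Even (fidx q)
  · rw [if_pos hq, arrow2_iff, arw_iff]
    have h1 : Even (fidx r - fidx q) ↔ Even (fidx r) := by
      rw [Int.even_sub]; tauto
    rw [h1]
  · rw [if_neg hq, arrow2_iff, arw_iff]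
    have h1 : Even (fidx q - fidx r) ↔ ¬ Even (fidx r) := by
      rw [Int.even_sub]; tauto
    rw [h1]
    tauto

attribute [local instance] Classical.propDecidable

/-- Satisfaction of a quantifier-free formula in the three variables `u, v, w`
of the language `{R}`, coded by a Boolean function of the nine atoms. -/
noncomputable def QFSat (θ : (Fin 3 → Fin 3 → Bool) → Bool) (x y z : ℂ) : Prop :=
  θ (fun i j => decide (Arrow2 (![x, y, z] i) (![x, y, z] j))) = true

/-- The Tarski–Vaught consequence of `⟨D, →↾D⟩ ≺ S(2)`. -/
def TarskiVaught2 (D : Set ℂ) : Prop :=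
  ∀ (θ : (Fin 3 → Fin 3 → Bool) → Bool), ∀ x ∈ D, ∀ y ∈ D,
    (∃ s ∈ Scirc, QFSat θ x y s) → ∃ z ∈ D, QFSat θ x y z

/-- If `D` is (the domain of) an elementary substructure of
`S(2)`, then `⟨D, ρ↾D⟩` cannot have both a minimum and a maximum. -/
theorem elementary_substructure_at_most_one_endpoint
    (D : Set ℂ) (hDS : D ⊆ Scirc) (hTV : TarskiVaught2 D) :
    ¬ ((∃ x ∈ D, ∀ z ∈ D, z ≠ x → Rho x z) ∧
       (∃ y ∈ D, ∀ z ∈ D, z ≠ y → Rho z y)) := by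
  rintro ⟨⟨x, hxD, hxmin⟩, ⟨y, hyD, hymax⟩⟩
  obtain ⟨qx, hqx⟩ := hDS hxD
  obtain ⟨qy, hqy⟩ := hDS hyD
  subst hqx; subst hqy
  have hp : (0:ℝ) < Real.pi := Real.pi_pos
  have hab : kval qx ≤ kval qy := by
    by_cases hxy : qx = qy
    · rw [hxy]
    · have hne : Complex.exp ((qy:ℂ) * Complex.I) ≠ Complex.exp ((qx:ℂ) * Complex.I) :=
        fun h => hxy (expq_inj h).symm
      exact le_of_lt (rho_lt (hxmin _ hyD hne))
  obtain ⟨s, hs1, hs2⟩ := exists_rat_btwn (kval_bounds qy).2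
  have hsgt : Real.pi/2 < (s:ℝ) := lt_trans (kval_bounds qy).1 hs1
  have hfs : fidx s = 0 := by
    unfold fidx
    rw [Int.floor_eq_iff]
    constructor
    · push_cast
      exact div_nonneg (by linarith) hp.le
    · push_cast
      rw [div_lt_iff₀ hp]
      linarith
  have hkvs : kval s = (s:ℝ) := by unfold kval; rw [hfs]; push_cast; ring
  set θ : (Fin 3 → Fin 3 → Bool) → Bool :=
    fun m => ((if Even (fidx qx) then m 0 2 else m 2 0) &&
              (if Even (fidx qy) then m 1 2 else m 2 1)) with hθ
  have hQF : ∀ r : ℚ, QFSat θ (Complex.exp ((qx:ℂ) * Complex.I))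
      (Complex.exp ((qy:ℂ) * Complex.I)) (Complex.exp ((r:ℂ) * Complex.I)) ↔
      (((Even (fidx r) ∧ kval qx < kval r) ∨ (¬ Even (fidx r) ∧ kval r < kval qx)) ∧
       ((Even (fidx r) ∧ kval qy < kval r) ∨ (¬ Even (fidx r) ∧ kval r < kval qy))) := by
    intro r
    rw [← cond_iff qx r, ← cond_iff qy r]
    by_cases h1 : Even (fidx qx) <;> by_cases h2 : Even (fidx qy) <;>
      simp [QFSat, hθ, h1, h2, Matrix.cons_val_zero, Matrix.cons_val_one,
        Matrix.head_cons, decide_eq_true_eq] <;>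
      exact ⟨fun h => ⟨@of_decide_eq_true _ _ h.1, @of_decide_eq_true _ _ h.2⟩,
        fun h => ⟨@decide_eq_true _ _ h.1, @decide_eq_true _ _ h.2⟩⟩
  obtain ⟨z, hzD, hz⟩ := hTV θ _ hxD _ hyD
    ⟨Complex.exp ((s:ℂ) * Complex.I), scirc_mem s, by
      rw [hQF s]
      constructor
      · left
        exact ⟨by rw [hfs]; exact Even.zero, by rw [hkvs]; linarith⟩
      · left
        exact ⟨by rw [hfs]; exact Even.zero, by rw [hkvs]; exact hs1⟩⟩
  obtain ⟨qz, hqz⟩ := hDS hzD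
  subst hqz
  rw [hQF qz] at hz
  by_cases hev : Even (fidx qz)
  · have h2 : kval qy < kval qz := by
      rcases hz.2 with ⟨_, h⟩ | ⟨h, _⟩
      · exact h
      · exact absurd hev h
    have hne : Complex.exp ((qz:ℂ) * Complex.I) ≠ Complex.exp ((qy:ℂ) * Complex.I) := by
      intro h
      rw [expq_inj h] at h2
      exact absurd h2 (lt_irrefl _)
    have := rho_lt (hymax _ hzD hne)
    linarith
  · have h1 : kval qz < kval qx := by
      rcases hz.1 with ⟨h, _⟩ | ⟨_, h⟩
      · exact absurd h hev
      · exact h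
    have hne : Complex.exp ((qz:ℂ) * Complex.I) ≠ Complex.exp ((qx:ℂ) * Complex.I) := by
      intro h
      rw [expq_inj h] at h1
      exact absurd h1 (lt_irrefl _)
    have := rho_lt (hxmin _ hzD hne)
    linarith
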